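/- Let r ∈ (0,∞) and let μ be a Borel probability measure on ℝ^q with compact support. Then dim_H^* μ ≤ D̲_r(μ), where dim_H^* μ := inf { dim_H(A) : A ⊆ ℝ^q Borel, μ(A) = 1 } is the (upper) Hausdorff dimension of the measure μ and dim_H denotes Hausdorff dimension. -/

import Mathlib

open MeasureTheory Filter Metric
open scoped ENNReal NNReal Topology

/-- The `n`-th quantization error of order `r` for a measure `P`:
`e_{n,r}(P) = inf { (∫ d(x,α)^r dP)^{1/r} : α ⊆ E, 1 ≤ card α ≤ n }`. -/
noncomputable def quantError {E : Type*} [MetricSpace E] [MeasurableSpace E]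
    (P : Measure E) (r : ℝ) (n : ℕ) : ℝ :=
  sInf {e : ℝ | ∃ α : Finset E, 1 ≤ α.card ∧ α.card ≤ n ∧
    e = (∫ x, infDist x (↑α : Set E) ^ r ∂P) ^ (1 / r)}

/-- The upper quantization dimension of order `r`. -/
noncomputable def upperQuantDim {E : Type*} [MetricSpace E] [MeasurableSpace E]
    (P : Measure E) (r : ℝ) : ℝ :=
  limsup (fun n : ℕ => Real.log n / (- Real.log (quantError P r n))) atTop

/-- The lower quantization dimension of order `r`. -/
noncomputable def lowerQuantDim {E : Type*} [MetricSpace E] [MeasurableSpace E]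
    (P : Measure E) (r : ℝ) : ℝ :=
  liminf (fun n : ℕ => Real.log n / (- Real.log (quantError P r n))) atTop

/-- The `s`-dimensional upper quantization coefficient of order `r`. -/
noncomputable def upperQuantCoeff {E : Type*} [MetricSpace E] [MeasurableSpace E]
    (P : Measure E) (r s : ℝ) : ℝ≥0∞ :=
  limsup (fun n : ℕ => ENNReal.ofReal ((n : ℝ) ^ (1 / s) * quantError P r n)) atTop

/-- The `s`-dimensional lower quantization coefficient of order `r`. -/
noncomputable def lowerQuantCoeff {E : Type*} [MetricSpace E] [MeasurableSpace E]
    (P : Measure E) (r s : ℝ) : ℝ≥0∞ :=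
  liminf (fun n : ℕ => ENNReal.ofReal ((n : ℝ) ^ (1 / s) * quantError P r n)) atTop


section Helpers
variable {E : Type*} [MetricSpace E] [MeasurableSpace E] [OpensMeasurableSpace E]
  {μ : Measure E} [IsProbabilityMeasure μ] {r : ℝ}

lemma quantSet_bddBelow (P : Measure E) (r : ℝ) (n : ℕ) :
    BddBelow {e : ℝ | ∃ α : Finset E, 1 ≤ α.card ∧ α.card ≤ n ∧
      e = (∫ x, infDist x (↑α : Set E) ^ r ∂P) ^ (1 / r)} := by
  refine ⟨0, fun e he => ?_⟩
  obtain ⟨α, -, -, rfl⟩ := he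
  exact Real.rpow_nonneg (integral_nonneg fun x => Real.rpow_nonneg infDist_nonneg _) _

lemma quantError_nonneg (P : Measure E) (r : ℝ) (n : ℕ) : 0 ≤ quantError P r n := by
  apply Real.sInf_nonneg
  rintro e ⟨α, -, -, rfl⟩
  exact Real.rpow_nonneg (integral_nonneg fun x => Real.rpow_nonneg infDist_nonneg _) _

lemma quantSet_nonempty [Nonempty E] (P : Measure E) (r : ℝ) {n : ℕ} (hn : 1 ≤ n) :
    Set.Nonempty {e : ℝ | ∃ α : Finset E, 1 ≤ α.card ∧ α.card ≤ n ∧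
      e = (∫ x, infDist x (↑α : Set E) ^ r ∂P) ^ (1 / r)} := by
  refine ⟨_, {Classical.arbitrary E}, ?_, ?_, rfl⟩ <;> simp [hn]

lemma quantError_le (P : Measure E) (r : ℝ) {n : ℕ} {α : Finset E}
    (h1 : 1 ≤ α.card) (h2 : α.card ≤ n) :
    quantError P r n ≤ (∫ x, infDist x (↑α : Set E) ^ r ∂P) ^ (1 / r) :=
  csInf_le (quantSet_bddBelow P r n) ⟨α, h1, h2, rfl⟩

lemma quantError_antitone [Nonempty E] (P : Measure E) (r : ℝ) {n m : ℕ}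
    (hn : 1 ≤ n) (hnm : n ≤ m) : quantError P r m ≤ quantError P r n := by
  apply csInf_le_csInf (quantSet_bddBelow P r m) (quantSet_nonempty P r hn)
  rintro e ⟨α, h1, h2, rfl⟩
  exact ⟨α, h1, h2.trans hnm, rfl⟩

lemma exists_near_optimal [Nonempty E] (P : Measure E) (r : ℝ) {n : ℕ} (hn : 1 ≤ n)
    {ε : ℝ} (hε : 0 < ε) :
    ∃ α : Finset E, 1 ≤ α.card ∧ α.card ≤ n ∧
      (∫ x, infDist x (↑α : Set E) ^ r ∂P) ^ (1 / r) < quantError P r n + ε := by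
  have h := exists_lt_of_csInf_lt (quantSet_nonempty P r hn)
    (show quantError P r n < quantError P r n + ε by linarith)
  obtain ⟨e, ⟨α, h1, h2, rfl⟩, he⟩ := h
  exact ⟨α, h1, h2, he⟩

lemma ae_mem_K {K : Set E} (hμK : μ Kᶜ = 0) : ∀ᵐ x ∂μ, x ∈ K := by
  rw [MeasureTheory.ae_iff]
  simpa [Set.compl_def] using hμK

lemma integrable_infDist_rpow (hr : 0 < r) {K : Set E} (hK : IsCompact K) (hμK : μ Kᶜ = 0)
    {α : Finset E} (hα : α.Nonempty) :
    Integrable (fun x => infDist x (↑α : Set E) ^ r) μ := by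
  obtain ⟨a₀, ha₀⟩ := hα
  obtain ⟨C, hC⟩ := hK.isBounded.subset_closedBall a₀
  have hC0 : 0 ≤ max C 0 := le_max_right _ _
  have hmeas : AEStronglyMeasurable (fun x => infDist x (↑α : Set E) ^ r) μ :=
    ((continuous_infDist_pt _).rpow_const (fun x => Or.inr hr.le)).aestronglyMeasurable
  refine Integrable.mono' (integrable_const ((max C 0) ^ r)) hmeas ?_
  filter_upwards [ae_mem_K hμK] with x hx
  rw [Real.norm_of_nonneg (Real.rpow_nonneg infDist_nonneg _)]
  apply Real.rpow_le_rpow infDist_nonneg _ hr.le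
  exact (infDist_le_dist_of_mem (Finset.mem_coe.2 ha₀)).trans
    ((hC hx).trans (le_max_left _ _))

lemma integral_infDist_rpow_le (hr : 0 < r) {K : Set E} (hK : IsCompact K) (hμK : μ Kᶜ = 0)
    {α : Finset E} (hα : α.Nonempty) {ε : ℝ} (hε : 0 ≤ ε)
    (h : ∀ x ∈ K, infDist x (↑α : Set E) ≤ ε) :
    (∫ x, infDist x (↑α : Set E) ^ r ∂μ) ≤ ε ^ r := by
  have hb : ∀ᵐ x ∂μ, infDist x (↑α : Set E) ^ r ≤ ε ^ r := by
    filter_upwards [ae_mem_K hμK] with x hx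
    exact Real.rpow_le_rpow infDist_nonneg (h x hx) hr.le
  calc (∫ x, infDist x (↑α : Set E) ^ r ∂μ) ≤ ∫ _, ε ^ r ∂μ :=
        integral_mono_ae (integrable_infDist_rpow hr hK hμK hα) (integrable_const _) hb
    _ = ε ^ r := by simp

lemma markov_infDist (hr : 0 < r) {K : Set E} (hK : IsCompact K) (hμK : μ Kᶜ = 0)
    {α : Finset E} (hα : α.Nonempty) {δ : ℝ} (hδ : 0 < δ) :
    μ {x | δ < infDist x (↑α : Set E)} ≤
      ENNReal.ofReal ((∫ x, infDist x (↑α : Set E) ^ r ∂μ) / δ ^ r) := by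
  have hint := integrable_infDist_rpow (μ := μ) hr hK hμK hα
  have hmk := mul_meas_ge_le_integral_of_nonneg
    (ae_of_all μ fun x => Real.rpow_nonneg infDist_nonneg r) hint (δ ^ r)
  have hsub : {x | δ < infDist x (↑α : Set E)} ⊆
      {x | δ ^ r ≤ infDist x (↑α : Set E) ^ r} := fun x hx =>
    Real.rpow_le_rpow hδ.le (le_of_lt hx) hr.le
  have hδr : 0 < δ ^ r := Real.rpow_pos_of_pos hδ r
  have hfin : μ {x | δ ^ r ≤ infDist x (↑α : Set E) ^ r} ≠ ∞ := measure_ne_top μ _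
  refine (measure_mono hsub).trans ?_
  rw [ENNReal.le_ofReal_iff_toReal_le hfin (div_nonneg (integral_nonneg fun x => Real.rpow_nonneg infDist_nonneg _) hδr.le)]
  rw [le_div_iff₀ hδr, mul_comm]
  exact hmk

end Helpers


/-- Coordinate approximation on `[-R, R]` by a grid of `m` points. -/
lemma grid_coord {R : ℝ} (hR : 0 < R) {m : ℕ} (hm : 1 ≤ m) {y : ℝ}
    (hy : |y| ≤ R) :
    ∃ j : Fin m, |y - (-R + (2 * (j : ℝ) + 1) * R / m)| ≤ R / m := by
  have hm0 : (0 : ℝ) < m := by exact_mod_cast hm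
  set z : ℝ := (y + R) * m / (2 * R) with hz
  have hz0 : 0 ≤ z := by
    apply div_nonneg (mul_nonneg (by cases abs_le.1 hy; linarith) (by positivity)) (by positivity)
  have hzm : z ≤ m := by
    rw [hz, div_le_iff₀ (by positivity)]
    have := (abs_le.1 hy).2
    nlinarith
  set j0 : ℕ := min (m - 1) ⌊z⌋₊ with hj0
  have hj0m : j0 < m := lt_of_le_of_lt (min_le_left _ _) (by omega)
  refine ⟨⟨j0, hj0m⟩, ?_⟩
  have key : 2 * (j0 : ℝ) * R / m ≤ y + R ∧ y + R ≤ 2 * ((j0 : ℝ) + 1) * R / m := by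
    have hzR : z * (2 * R) = (y + R) * m := by rw [hz]; field_simp
    rcases le_or_gt ⌊z⌋₊ (m - 1) with hc | hc
    · have hj0e : j0 = ⌊z⌋₊ := min_eq_right hc
      have h1 : (⌊z⌋₊ : ℝ) ≤ z := Nat.floor_le hz0
      have h2 : z < ⌊z⌋₊ + 1 := Nat.lt_floor_add_one z
      rw [hj0e]
      constructor
      · rw [div_le_iff₀ hm0]; nlinarith
      · rw [le_div_iff₀ hm0]; nlinarith
    · have hj0e : j0 = m - 1 := min_eq_left hc.le
      have hzge : (m : ℝ) ≤ z := by
        calc (m : ℝ) ≤ ⌊z⌋₊ := by exact_mod_cast (by omega : m ≤ ⌊z⌋₊)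
        _ ≤ z := Nat.floor_le hz0
      have hy2 : y + R = 2 * R := by
        have := (abs_le.1 hy).2
        nlinarith
      rw [hj0e, hy2]
      have hm1 : ((m - 1 : ℕ) : ℝ) = (m : ℝ) - 1 := by
        push_cast [Nat.cast_sub hm]; ring
      rw [hm1]
      constructor
      · rw [div_le_iff₀ hm0]; nlinarith
      · rw [le_div_iff₀ hm0]; nlinarith
  obtain ⟨h1, h2⟩ := key
  have hcl : (2 * (j0:ℝ) + 1) * R / m = 2 * (j0:ℝ) * R / m + R / m := by ring
  have hcu : 2 * ((j0:ℝ) + 1) * R / m = 2 * (j0:ℝ) * R / m + R / m + R / m := by ring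
  rw [hcu] at h2
  rw [abs_le]
  constructor
  · rw [hcl]; push_cast; linarith
  · rw [hcl]; push_cast; linarith

/-- Grid covering of a ball in Euclidean space. -/
lemma grid_cover (q : ℕ) {R : ℝ} (hR : 0 < R) {m : ℕ} (hm : 1 ≤ m) :
    ∃ α : Finset (EuclideanSpace ℝ (Fin q)), α.Nonempty ∧ α.card ≤ m ^ q ∧
      ∀ x ∈ closedBall (0 : EuclideanSpace ℝ (Fin q)) R,
        infDist x (↑α : Set (EuclideanSpace ℝ (Fin q))) ≤ Real.sqrt q * R / m := by
  classical
  have : Nonempty (Fin m) := ⟨⟨0, hm⟩⟩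
  have hm0 : (0 : ℝ) < m := by exact_mod_cast hm
  have hRm : 0 ≤ R / m := by positivity
  set g : (Fin q → Fin m) → EuclideanSpace ℝ (Fin q) :=
    fun v => WithLp.toLp 2 (fun i => -R + (2 * ((v i : ℕ) : ℝ) + 1) * R / m) with hg
  refine ⟨Finset.image g Finset.univ, ?_, ?_, ?_⟩
  · exact (Finset.univ_nonempty).image _
  · exact (Finset.card_image_le).trans (by simp)
  · intro x hx
    have hxc : ∀ i, |x i| ≤ R := by
      intro i
      have h1 : ‖x‖ ≤ R := by simpa using (mem_closedBall.1 hx)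
      have h2 : |x i| ≤ ‖x‖ := by
        rw [EuclideanSpace.norm_eq, ← Real.sqrt_sq (abs_nonneg (x i))]
        apply Real.sqrt_le_sqrt
        rw [sq_abs]
        have h3 : ‖x i‖ ^ 2 ≤ ∑ j, ‖x j‖ ^ 2 :=
          Finset.single_le_sum (f := fun j => ‖x j‖ ^ 2) (fun j _ => by positivity)
            (Finset.mem_univ i)
        simpa [Real.norm_eq_abs, sq_abs] using h3
      linarith
    choose v hv using fun i => grid_coord hR hm (hxc i)
    have hgv : g v ∈ (↑(Finset.image g Finset.univ) : Set (EuclideanSpace ℝ (Fin q))) := by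
      simp only [Finset.coe_image, Set.mem_image]
      exact ⟨v, by simp, rfl⟩
    refine (infDist_le_dist_of_mem hgv).trans ?_
    rw [EuclideanSpace.dist_eq]
    have hb : ∀ i, dist (x i) (g v i) ^ 2 ≤ (R / m) ^ 2 := by
      intro i
      rw [Real.dist_eq]
      have h := hv i
      have : |x i - g v i| ≤ R / m := by simpa [hg] using h
      exact pow_le_pow_left₀ (abs_nonneg _) this 2
    have hsum : ∑ i, dist (x i) (g v i) ^ 2 ≤ (q : ℝ) * (R / m) ^ 2 := by
      calc ∑ i, dist (x i) (g v i) ^ 2 ≤ ∑ _i : Fin q, (R / m) ^ 2 :=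
            Finset.sum_le_sum fun i _ => hb i
        _ = (q : ℝ) * (R / m) ^ 2 := by simp [Finset.sum_const, nsmul_eq_mul]
    calc Real.sqrt (∑ i, dist (x i) (g v i) ^ 2) ≤ Real.sqrt ((q : ℝ) * (R / m) ^ 2) :=
          Real.sqrt_le_sqrt hsum
      _ = Real.sqrt q * (R / m) := by
          rw [Real.sqrt_mul (by positivity), Real.sqrt_sq hRm]
      _ = Real.sqrt q * R / m := by ring

lemma rpow_geom_bound {n k : ℕ} (h : 2 ^ k ≤ n) {c : ℝ} (hc : c ≤ 0) :
    (n : ℝ) ^ c ≤ ((2 : ℝ) ^ c) ^ k := by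
  have h2 : (0 : ℝ) < 2 ^ k := by positivity
  have hn : ((2 : ℝ)) ^ (k : ℕ) ≤ (n : ℝ) := by exact_mod_cast h
  calc (n : ℝ) ^ c ≤ ((2 : ℝ) ^ (k : ℕ)) ^ c := Real.rpow_le_rpow_of_nonpos h2 hn hc
    _ = ((2 : ℝ) ^ c) ^ k := by
        rw [← Real.rpow_natCast 2 k, ← Real.rpow_mul (by norm_num), mul_comm,
          Real.rpow_mul (by norm_num), Real.rpow_natCast]

lemma ediam_ball_le' {X : Type*} [MetricSpace X] (x : X) (r : ℝ) :
    EMetric.diam (Metric.ball x r) ≤ ENNReal.ofReal (2 * r) := by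
  have := EMetric.diam_ball (x := x) (r := ENNReal.ofReal r)
  rw [Metric.emetric_ball] at this
  refine this.trans ?_
  rcases le_or_gt r 0 with h | h
  · simp [ENNReal.ofReal_eq_zero.2 h, ENNReal.ofReal_eq_zero.2 (by linarith : 2*r ≤ 0)]
  · rw [ENNReal.ofReal_mul (by norm_num)]
    simp [ENNReal.ofReal_ofNat]

lemma main_aux (q : ℕ) (hq : 1 ≤ q) (r : ℝ) (hr : 0 < r)
    (μ : Measure (EuclideanSpace ℝ (Fin q))) [IsProbabilityMeasure μ]
    (K : Set (EuclideanSpace ℝ (Fin q))) (hK : IsCompact K) (hμK : μ Kᶜ = 0)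
    (t : ℝ) (ht : 0 < t) (hDt : lowerQuantDim μ r < t) :
    ∃ A : Set (EuclideanSpace ℝ (Fin q)), MeasurableSet A ∧ μ A = 1 ∧
      dimH A ≤ ENNReal.ofReal t := by
  set f : ℕ → ℝ := fun n => Real.log n / (- Real.log (quantError μ r n)) with hf
  -- radius
  obtain ⟨R0, hR0⟩ := hK.isBounded.subset_closedBall 0
  set R : ℝ := max R0 1 with hR
  have hR1 : (1 : ℝ) ≤ R := le_max_right _ _
  have hRpos : (0 : ℝ) < R := by linarith
  have hKR : K ⊆ closedBall (0 : EuclideanSpace ℝ (Fin q)) R :=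
    hR0.trans (closedBall_subset_closedBall (le_max_left _ _))
  set L : ℝ := Real.sqrt q * R with hL
  have hL1 : (1 : ℝ) ≤ L := by
    have h1 : (1 : ℝ) ≤ Real.sqrt q := by
      rw [show (1:ℝ) = Real.sqrt 1 by simp]
      exact Real.sqrt_le_sqrt (by exact_mod_cast hq)
    nlinarith
  have hLpos : (0 : ℝ) < L := by linarith
  -- the grid bound
  have hQ : ∀ m : ℕ, 1 ≤ m → quantError μ r (m ^ q) ≤ L / m := by
    intro m hm
    have hm0 : (0 : ℝ) < m := by exact_mod_cast hm
    obtain ⟨α, hα, hcard, hcov⟩ := grid_cover q hRpos hm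
    have hLm : 0 ≤ L / m := by positivity
    have hint : (∫ x, infDist x (↑α : Set (EuclideanSpace ℝ (Fin q))) ^ r ∂μ) ≤ (L / m) ^ r :=
      integral_infDist_rpow_le hr hK hμK hα hLm
        (fun x hx => by simpa [hL, mul_div_assoc] using hcov x (hKR hx))
    calc quantError μ r (m ^ q)
        ≤ (∫ x, infDist x (↑α : Set (EuclideanSpace ℝ (Fin q))) ^ r ∂μ) ^ (1 / r) :=
          quantError_le μ r hα.card_pos hcard
      _ ≤ ((L / m) ^ r) ^ (1/r) := by
          apply Real.rpow_le_rpow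
            (integral_nonneg fun x => Real.rpow_nonneg infDist_nonneg _) hint
          positivity
      _ = L / m := by
          rw [one_div, Real.rpow_rpow_inv hLm hr.ne']
  -- eventually small
  set m₂ : ℕ := ⌈L⌉₊ + 1 with hm₂
  have hm₂1 : 1 ≤ m₂ := by omega
  have hm₂L : L < m₂ := by
    have := Nat.le_ceil L
    have h2 : (⌈L⌉₊ : ℝ) < m₂ := by exact_mod_cast Nat.lt_succ_self _
    linarith
  set N₁ : ℕ := m₂ ^ q with hN₁
  have hN₁1 : 1 ≤ N₁ := Nat.one_le_pow _ _ hm₂1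
  have hsmall : ∀ n : ℕ, N₁ ≤ n → quantError μ r n < 1 := by
    intro n hn
    have h1 : quantError μ r n ≤ quantError μ r N₁ := quantError_antitone μ r hN₁1 hn
    have h2 : quantError μ r N₁ ≤ L / m₂ := hQ m₂ hm₂1
    have h3 : L / m₂ < 1 := by
      rw [div_lt_one (by exact_mod_cast hm₂1)]
      exact hm₂L
    linarith
  -- coboundedness : frequently f n ≤ 2q
  have hfreqle : ∃ᶠ n in atTop, f n ≤ 2 * q := by
    rw [frequently_atTop]
    intro N
    set m : ℕ := max (max N 3) (⌈Real.exp (2 * Real.log L)⌉₊ + 1) with hm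
    have hm3 : 3 ≤ m := le_trans (le_max_right N 3) (le_max_left _ _)
    have hm1 : 1 ≤ m := by omega
    have hmN : N ≤ m := le_trans (le_max_left N 3) (le_max_left _ _)
    have hm0 : (0 : ℝ) < m := by exact_mod_cast hm1
    refine ⟨m ^ q, le_trans hmN (Nat.le_self_pow (by omega) m), ?_⟩
    have hlogm : 2 * Real.log L ≤ Real.log m := by
      have h1 : Real.exp (2 * Real.log L) ≤ m := by
        have h2 : (⌈Real.exp (2 * Real.log L)⌉₊ + 1 : ℕ) ≤ m :=
          le_max_right _ _
        have := Nat.le_ceil (Real.exp (2 * Real.log L))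
        have h3 : ((⌈Real.exp (2 * Real.log L)⌉₊ : ℕ) : ℝ) ≤ m := by
          exact_mod_cast le_trans (Nat.le_succ _) h2
        linarith
      calc 2 * Real.log L = Real.log (Real.exp (2 * Real.log L)) := by
            rw [Real.log_exp]
        _ ≤ Real.log m := Real.log_le_log (Real.exp_pos _) h1
    have hlogm_pos : 0 < Real.log m := Real.log_pos (by exact_mod_cast (by omega : 1 < m))
    have he0 := quantError_nonneg μ r (m ^ q)
    have heL := hQ m hm1
    have hlogn : Real.log ((m ^ q : ℕ) : ℝ) = q * Real.log m := by
      push_cast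
      rw [Real.log_pow]
    rcases he0.eq_or_lt with he | he
    · have hz : f (m ^ q) = 0 := by
        show Real.log ((m ^ q : ℕ) : ℝ) / (- Real.log (quantError μ r (m ^ q))) = 0
        rw [← he, Real.log_zero, neg_zero, div_zero]
      rw [hz]; positivity
    · have hloge : Real.log (quantError μ r (m ^ q)) ≤ Real.log L - Real.log m := by
        calc Real.log (quantError μ r (m ^ q)) ≤ Real.log (L / m) :=
              Real.log_le_log he heL
          _ = Real.log L - Real.log m := Real.log_div hLpos.ne' hm0.ne'
      have hden : (1/2) * Real.log m ≤ - Real.log (quantError μ r (m ^ q)) := by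
        nlinarith
      have hdenpos : 0 < (1/2) * Real.log m := by linarith
      have hnum : 0 ≤ (q : ℝ) * Real.log m := by positivity
      calc f (m ^ q) = (q : ℝ) * Real.log m / (- Real.log (quantError μ r (m ^ q))) := by
            show Real.log ((m ^ q : ℕ) : ℝ) / (- Real.log (quantError μ r (m ^ q))) = _
            rw [hlogn]
        _ ≤ (q : ℝ) * Real.log m / ((1/2) * Real.log m) :=
            div_le_div_of_nonneg_left hnum hdenpos hden
        _ = 2 * q := by field_simp
  have hcob : IsCoboundedUnder (· ≥ ·) atTop f :=
    Filter.IsCoboundedUnder.of_frequently_le hfreqle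
  -- choose t' t''
  set D : ℝ := lowerQuantDim μ r with hD
  set t' : ℝ := (max D 0 + t) / 2 with ht'
  set t'' : ℝ := (t' + t) / 2 with ht''
  have hmaxlt : max D 0 < t := max_lt hDt ht
  have hDt' : D < t' := lt_of_le_of_lt (le_max_left D 0) (by rw [ht']; linarith)
  have ht'pos : 0 < t' := by
    have : (0:ℝ) ≤ max D 0 := le_max_right _ _
    rw [ht']; linarith
  have ht't'' : t' < t'' := by rw [ht'']; linarith [show t' < t by rw [ht']; linarith]
  have ht''t : t'' < t := by rw [ht'']; linarith [show t' < t by rw [ht']; linarith]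
  have ht''pos : 0 < t'' := by linarith
  -- frequently f n < t'
  have hfreq : ∃ᶠ n in atTop, f n < t' := frequently_lt_of_liminf_lt hcob hDt'
  -- extract subsequence
  have hex : ∀ k : ℕ, ∃ n : ℕ, max (2 ^ k) (max N₁ 2) ≤ n ∧ f n < t' := by
    intro k
    obtain ⟨n, hn, hfn⟩ := frequently_atTop.mp hfreq (max (2 ^ k) (max N₁ 2))
    exact ⟨n, hn, hfn⟩
  choose nk hnk hfk using hex
  have hnk2pow : ∀ k, 2 ^ k ≤ nk k := fun k => le_trans (le_max_left _ _) (hnk k)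
  have hnkN₁ : ∀ k, N₁ ≤ nk k := fun k =>
    le_trans (le_trans (le_max_left _ _) (le_max_right _ _)) (hnk k)
  have hnk2 : ∀ k, 2 ≤ nk k := fun k =>
    le_trans (le_trans (le_max_right _ _) (le_max_right _ _)) (hnk k)
  have hnkpos : ∀ k, (0:ℝ) < nk k := fun k => by
    have := hnk2 k; positivity
  -- quantError bound along subsequence
  have henk : ∀ k, quantError μ r (nk k) ≤ (nk k : ℝ) ^ (-(1/t')) := by
    intro k
    have hrpow_pos : (0:ℝ) < (nk k : ℝ) ^ (-(1/t')) :=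
      Real.rpow_pos_of_pos (hnkpos k) _
    have he0 := quantError_nonneg μ r (nk k)
    rcases he0.eq_or_lt with he | he
    · rw [← he]; exact hrpow_pos.le
    · have he1 : quantError μ r (nk k) < 1 := hsmall _ (hnkN₁ k)
      have hlneg : Real.log (quantError μ r (nk k)) < 0 := Real.log_neg he he1
      have hfklt : Real.log ((nk k : ℕ) : ℝ) / (- Real.log (quantError μ r (nk k))) < t' :=
        hfk k
      have hdenpos : 0 < - Real.log (quantError μ r (nk k)) := by linarith
      have h1 : Real.log (nk k) < t' * (- Real.log (quantError μ r (nk k))) :=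
        (div_lt_iff₀ hdenpos).mp hfklt
      have h2' : Real.log ((nk k : ℕ) : ℝ) / t' < - Real.log (quantError μ r (nk k)) :=
        (div_lt_iff₀ ht'pos).mpr (by linarith)
      have h2 : Real.log (quantError μ r (nk k)) < -(Real.log ((nk k : ℕ) : ℝ) / t') := by
        linarith
      have h3 : quantError μ r (nk k) < Real.exp (-(Real.log ((nk k : ℕ) : ℝ) / t')) := by
        calc quantError μ r (nk k) = Real.exp (Real.log (quantError μ r (nk k))) :=
              (Real.exp_log he).symm
          _ < Real.exp (-(Real.log ((nk k : ℕ) : ℝ) / t')) := Real.exp_lt_exp.mpr h2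
      refine h3.le.trans (le_of_eq ?_)
      rw [Real.rpow_def_of_pos (hnkpos k)]
      congr 1
      ring
  -- near-optimal codebooks
  have hexα : ∀ k, ∃ α : Finset (EuclideanSpace ℝ (Fin q)), 1 ≤ α.card ∧ α.card ≤ nk k ∧
      (∫ x, infDist x (↑α : Set (EuclideanSpace ℝ (Fin q))) ^ r ∂μ) ^ (1 / r) <
        quantError μ r (nk k) + (nk k : ℝ) ^ (-(1/t')) := fun k =>
    exists_near_optimal μ r (by linarith [hnk2 k] : 1 ≤ nk k)
      (Real.rpow_pos_of_pos (hnkpos k) _)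
  choose αk hαk1 hαk2 hαk3 using hexα
  have hαne : ∀ k, (αk k).Nonempty := fun k => Finset.card_pos.mp (hαk1 k)
  -- integral bound
  have hI : ∀ k, (∫ x, infDist x (↑(αk k) : Set (EuclideanSpace ℝ (Fin q))) ^ r ∂μ) ≤
      (2 * (nk k : ℝ) ^ (-(1/t'))) ^ r := by
    intro k
    have hI0 : 0 ≤ ∫ x, infDist x (↑(αk k) : Set (EuclideanSpace ℝ (Fin q))) ^ r ∂μ :=
      integral_nonneg fun x => Real.rpow_nonneg infDist_nonneg _
    have hB : (∫ x, infDist x (↑(αk k) : Set (EuclideanSpace ℝ (Fin q))) ^ r ∂μ) ^ (1/r) ≤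
        2 * (nk k : ℝ) ^ (-(1/t')) := by
      have := hαk3 k
      have := henk k
      linarith
    calc (∫ x, infDist x (↑(αk k) : Set (EuclideanSpace ℝ (Fin q))) ^ r ∂μ)
        = ((∫ x, infDist x (↑(αk k) : Set (EuclideanSpace ℝ (Fin q))) ^ r ∂μ) ^ (1/r)) ^ r := by
          rw [one_div, Real.rpow_inv_rpow hI0 hr.ne']
      _ ≤ (2 * (nk k : ℝ) ^ (-(1/t'))) ^ r :=
          Real.rpow_le_rpow (Real.rpow_nonneg hI0 _) hB hr.le
  -- the bad sets
  set δ : ℕ → ℝ := fun k => (nk k : ℝ) ^ (-(1/t'')) with hδ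
  have hδpos : ∀ k, 0 < δ k := fun k => Real.rpow_pos_of_pos (hnkpos k) _
  set Bad : ℕ → Set (EuclideanSpace ℝ (Fin q)) :=
    fun k => {x | δ k < infDist x (↑(αk k) : Set (EuclideanSpace ℝ (Fin q)))} with hBad
  have hBadOpen : ∀ k, IsOpen (Bad k) := fun k =>
    isOpen_lt continuous_const (continuous_infDist_pt _)
  have hBadMeas : ∀ k, MeasurableSet (Bad k) := fun k => (hBadOpen k).measurableSet
  -- measure bound
  set c : ℝ := r * (1/t' - 1/t'') with hc
  have hcpos : 0 < c := by
    have h1 : 1/t'' < 1/t' := by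
      apply one_div_lt_one_div_of_lt ht'pos ht't''
    have : 0 < 1/t' - 1/t'' := by linarith
    positivity
  set θ : ℝ := (2:ℝ) ^ (-c) with hθ
  have hθpos : 0 < θ := Real.rpow_pos_of_pos (by norm_num) _
  have hθlt1 : θ < 1 := Real.rpow_lt_one_of_one_lt_of_neg (by norm_num) (by linarith)
  have hBadBound : ∀ k, μ (Bad k) ≤ ENNReal.ofReal ((2:ℝ)^r * θ ^ k) := by
    intro k
    have hmk := markov_infDist hr hK hμK (hαne k) (hδpos k)
    refine hmk.trans (ENNReal.ofReal_le_ofReal ?_)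
    have hδr : (0:ℝ) < δ k ^ r := Real.rpow_pos_of_pos (hδpos k) _
    rw [div_le_iff₀ hδr]
    calc (∫ x, infDist x (↑(αk k) : Set (EuclideanSpace ℝ (Fin q))) ^ r ∂μ)
        ≤ (2 * (nk k : ℝ) ^ (-(1/t'))) ^ r := hI k
      _ = (2:ℝ)^r * (nk k : ℝ) ^ (-(r/t')) := by
          have hp : ((nk k : ℝ) ^ (-(1/t'))) ^ r = (nk k : ℝ) ^ (-(r/t')) := by
            rw [← Real.rpow_mul (hnkpos k).le]
            congr 1
            ring
          rw [Real.mul_rpow (by norm_num) (Real.rpow_nonneg (hnkpos k).le _), hp]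
      _ ≤ ((2:ℝ)^r * θ ^ k) * δ k ^ r := by
          have hδkr : δ k ^ r = (nk k : ℝ) ^ (-(r/t'')) := by
            rw [hδ]
            rw [← Real.rpow_mul (hnkpos k).le]
            congr 1
            ring
          rw [hδkr]
          have hsplit : (nk k : ℝ) ^ (-(r/t')) =
              (nk k : ℝ) ^ (-c) * (nk k : ℝ) ^ (-(r/t'')) := by
            rw [← Real.rpow_add (hnkpos k)]
            congr 1
            rw [hc]; ring
          rw [hsplit]
          have hgeom : (nk k : ℝ) ^ (-c) ≤ θ ^ k :=
            rpow_geom_bound (hnk2pow k) (by linarith)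
          have h2 : (0:ℝ) ≤ (nk k : ℝ) ^ (-(r/t'')) :=
            Real.rpow_nonneg (hnkpos k).le _
          have h3 : (0:ℝ) < (2:ℝ)^r := Real.rpow_pos_of_pos (by norm_num) _
          exact (mul_le_mul_of_nonneg_left
            (mul_le_mul_of_nonneg_right hgeom h2) h3.le).trans_eq (by ring)
  -- Borel-Cantelli
  have hsum : (∑' k, μ (Bad k)) ≠ ∞ := by
    have hle : (∑' k, μ (Bad k)) ≤ ∑' k, ENNReal.ofReal ((2:ℝ)^r * θ ^ k) :=
      ENNReal.tsum_le_tsum hBadBound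
    have heq : ∀ k : ℕ, ENNReal.ofReal ((2:ℝ)^r * θ ^ k) =
        ENNReal.ofReal ((2:ℝ)^r) * (ENNReal.ofReal θ) ^ k := by
      intro k
      rw [ENNReal.ofReal_mul (Real.rpow_nonneg (by norm_num) _), ENNReal.ofReal_pow hθpos.le]
    have hgeo : (∑' k : ℕ, ENNReal.ofReal ((2:ℝ)^r * θ ^ k)) =
        ENNReal.ofReal ((2:ℝ)^r) * (1 - ENNReal.ofReal θ)⁻¹ := by
      simp_rw [heq]
      rw [ENNReal.tsum_mul_left, ENNReal.tsum_geometric]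
    refine ne_top_of_le_ne_top ?_ (hle.trans_eq hgeo)
    apply ENNReal.mul_ne_top ENNReal.ofReal_ne_top
    rw [Ne, ENNReal.inv_eq_top, tsub_eq_zero_iff_le]
    rw [not_le]
    exact ENNReal.ofReal_lt_one.mpr hθlt1
  have hBC : μ (limsup Bad atTop) = 0 := measure_limsup_atTop_eq_zero hsum
  have hLimsupMeas : MeasurableSet (limsup Bad atTop) := by
    rw [limsup_eq_iInf_iSup_of_nat]
    exact MeasurableSet.iInter fun n =>
      MeasurableSet.iUnion fun i => MeasurableSet.iUnion fun _ => hBadMeas i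
  refine ⟨(limsup Bad atTop)ᶜ, hLimsupMeas.compl, ?_, ?_⟩
  · rw [measure_compl hLimsupMeas (measure_ne_top μ _), hBC, measure_univ]
    simp
  -- Hausdorff dimension bound
  · have hA : (limsup Bad atTop)ᶜ = ⋃ m : ℕ, ⋂ k : ℕ, ⋂ (_ : m ≤ k), (Bad k)ᶜ := by
      rw [limsup_eq_iInf_iSup_of_nat]
      simp only [Set.iInf_eq_iInter, Set.iSup_eq_iUnion, Set.compl_iInter, Set.compl_iUnion, ge_iff_le]
    rw [hA, dimH_iUnion]
    refine iSup_le fun m => ?_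
    -- Hausdorff measure of the tail intersection is zero
    have hzero : μH[t] (⋂ k : ℕ, ⋂ (_ : m ≤ k), (Bad k)ᶜ) = 0 := by
      set θ₂ : ℝ := (2:ℝ) ^ (-(1/t'')) with hθ₂
      have hθ₂pos : 0 < θ₂ := Real.rpow_pos_of_pos (by norm_num) _
      have hθ₂lt1 : θ₂ < 1 := Real.rpow_lt_one_of_one_lt_of_neg (by norm_num)
        (by rw [neg_lt, neg_zero]; positivity)
      have hδbound : ∀ k, δ k ≤ θ₂ ^ k := fun k => by
        have := rpow_geom_bound (hnk2pow k) (c := -(1/t''))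
          (by rw [neg_nonpos]; positivity)
        simpa [hδ, hθ₂] using this
      -- radius tends to zero
      have hδtend : Tendsto (fun k => ENNReal.ofReal (4 * δ k)) atTop (𝓝 0) := by
        have hreal : Tendsto (fun k : ℕ => 4 * δ k) atTop (𝓝 0) := by
          apply squeeze_zero (g := fun k => 4 * θ₂ ^ k) (fun k => by have := hδpos k; positivity)
            (fun k => by show 4 * δ k ≤ 4 * θ₂ ^ k; have := hδbound k; linarith)
          have := (tendsto_pow_atTop_nhds_zero_of_lt_one hθ₂pos.le hθ₂lt1).const_mul (4:ℝ)
          simpa using this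
        have := ENNReal.tendsto_ofReal hreal
        simpa using this
      -- diameter bound
      have hdiam : ∀ᶠ k in atTop, ∀ i : (αk k : Finset (EuclideanSpace ℝ (Fin q))),
          EMetric.diam (ball (i : EuclideanSpace ℝ (Fin q)) (2 * δ k)) ≤
            ENNReal.ofReal (4 * δ k) := by
        refine Eventually.of_forall fun k i => ?_
        refine (ediam_ball_le' _ _).trans (le_of_eq ?_)
        rw [show 2 * (2 * δ k) = 4 * δ k by ring]
      -- covering
      have hcover : ∀ᶠ k in atTop, (⋂ k : ℕ, ⋂ (_ : m ≤ k), (Bad k)ᶜ) ⊆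
          ⋃ i : (αk k : Finset (EuclideanSpace ℝ (Fin q))),
            ball (i : EuclideanSpace ℝ (Fin q)) (2 * δ k) := by
        rw [eventually_atTop]
        refine ⟨m, fun k hk x hx => ?_⟩
        have hxk : x ∈ (Bad k)ᶜ := Set.mem_iInter.1 (Set.mem_iInter.1 hx k) hk
        have hinf : infDist x (↑(αk k) : Set (EuclideanSpace ℝ (Fin q))) ≤ δ k := not_lt.1 hxk
        have hlt : infDist x (↑(αk k) : Set (EuclideanSpace ℝ (Fin q))) < 2 * δ k :=
          lt_of_le_of_lt hinf (by linarith [hδpos k])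
        obtain ⟨y, hy, hxy⟩ := (infDist_lt_iff (Finset.coe_nonempty.mpr (hαne k))).1 hlt
        exact Set.mem_iUnion.2 ⟨⟨y, hy⟩, mem_ball'.2 (by rwa [dist_comm])⟩
      have hle := Measure.hausdorffMeasure_le_liminf_sum t (⋂ k : ℕ, ⋂ (_ : m ≤ k), (Bad k)ᶜ)
        (fun k => ENNReal.ofReal (4 * δ k)) hδtend
        (fun k (i : (αk k : Finset (EuclideanSpace ℝ (Fin q)))) =>
          ball (i : EuclideanSpace ℝ (Fin q)) (2 * δ k)) hdiam hcover
      -- bound the sums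
      set g : ℝ := (2:ℝ) ^ (1 - t/t'') with hg
      have hgpos : 0 < g := Real.rpow_pos_of_pos (by norm_num) _
      have hglt1 : g < 1 := by
        apply Real.rpow_lt_one_of_one_lt_of_neg (by norm_num)
        have : 1 < t / t'' := (one_lt_div ht''pos).mpr ht''t
        linarith
      have hsumle : ∀ k, (∑ i : (αk k : Finset (EuclideanSpace ℝ (Fin q))),
          EMetric.diam (ball (i : EuclideanSpace ℝ (Fin q)) (2 * δ k)) ^ t)
          ≤ ENNReal.ofReal ((4:ℝ)^t * g ^ k) := by
        intro k
        have h4δ : (0:ℝ) < 4 * δ k := by have := hδpos k; linarith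
        have hterm : ∀ i : (αk k : Finset (EuclideanSpace ℝ (Fin q))),
            EMetric.diam (ball (i : EuclideanSpace ℝ (Fin q)) (2 * δ k)) ^ t ≤
              ENNReal.ofReal ((4 * δ k) ^ t) := by
          intro i
          have h1 : EMetric.diam (ball (i : EuclideanSpace ℝ (Fin q)) (2 * δ k)) ^ t ≤
              (ENNReal.ofReal (4 * δ k)) ^ t := by
            apply ENNReal.rpow_le_rpow ?_ ht.le
            refine (ediam_ball_le' _ _).trans (le_of_eq ?_)
            rw [show 2 * (2 * δ k) = 4 * δ k by ring]
          rwa [ENNReal.ofReal_rpow_of_pos h4δ] at h1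
        calc (∑ i : (αk k : Finset (EuclideanSpace ℝ (Fin q))),
            EMetric.diam (ball (i : EuclideanSpace ℝ (Fin q)) (2 * δ k)) ^ t)
            ≤ ∑ _i : (αk k : Finset (EuclideanSpace ℝ (Fin q))),
                ENNReal.ofReal ((4 * δ k) ^ t) := Finset.sum_le_sum fun i _ => hterm i
          _ = ((αk k).card : ℝ≥0∞) * ENNReal.ofReal ((4 * δ k) ^ t) := by
              rw [Finset.sum_const, Finset.card_univ, Fintype.card_coe, nsmul_eq_mul]
          _ ≤ ((nk k : ℕ) : ℝ≥0∞) * ENNReal.ofReal ((4 * δ k) ^ t) := by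
              apply mul_le_mul_left
              exact_mod_cast hαk2 k
          _ = ENNReal.ofReal ((nk k : ℝ) * (4 * δ k) ^ t) := by
              rw [ENNReal.ofReal_mul (by positivity : (0:ℝ) ≤ (nk k : ℝ))]
              rw [ENNReal.ofReal_natCast]
          _ ≤ ENNReal.ofReal ((4:ℝ)^t * g ^ k) := by
              apply ENNReal.ofReal_le_ofReal
              have hδt : (4 * δ k) ^ t = (4:ℝ)^t * (nk k : ℝ) ^ (-(t/t'')) := by
                rw [Real.mul_rpow (by norm_num) (hδpos k).le, hδ]
                congr 1
                rw [← Real.rpow_mul (hnkpos k).le]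
                congr 1
                ring
              rw [hδt]
              have hcomb : (nk k : ℝ) * ((4:ℝ)^t * (nk k : ℝ) ^ (-(t/t''))) =
                  (4:ℝ)^t * (nk k : ℝ) ^ (1 - t/t'') := by
                rw [sub_eq_add_neg, Real.rpow_add (hnkpos k), Real.rpow_one]
                ring
              rw [show (nk k : ℝ) * ((4:ℝ)^t * (nk k : ℝ) ^ (-(t/t''))) =
                  (nk k : ℝ) * ((4:ℝ)^t * (nk k : ℝ) ^ (-(t/t''))) from rfl, hcomb]
              have hgb : (nk k : ℝ) ^ (1 - t/t'') ≤ g ^ k := by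
                have := rpow_geom_bound (hnk2pow k) (c := 1 - t/t'')
                  (by have : 1 < t / t'' := (one_lt_div ht''pos).mpr ht''t; linarith)
                simpa [hg] using this
              have h4t : (0:ℝ) ≤ (4:ℝ)^t := (Real.rpow_pos_of_pos (by norm_num) _).le
              exact mul_le_mul_of_nonneg_left hgb h4t
      have htend0 : Tendsto (fun k => ENNReal.ofReal ((4:ℝ)^t * g ^ k)) atTop (𝓝 0) := by
        have hreal : Tendsto (fun k : ℕ => (4:ℝ)^t * g ^ k) atTop (𝓝 0) := by
          have := (tendsto_pow_atTop_nhds_zero_of_lt_one hgpos.le hglt1).const_mul ((4:ℝ)^t)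
          simpa using this
        have := ENNReal.tendsto_ofReal hreal
        simpa using this
      refine le_antisymm (hle.trans ?_) zero_le
      have h1 := liminf_le_liminf (f := atTop) (Eventually.of_forall hsumle)
        (u := fun k => ∑ i : (αk k : Finset (EuclideanSpace ℝ (Fin q))),
          EMetric.diam (ball (i : EuclideanSpace ℝ (Fin q)) (2 * δ k)) ^ t)
        (v := fun k => ENNReal.ofReal ((4:ℝ)^t * g ^ k))
      rwa [htend0.liminf_eq] at h1
    have hne : μH[((t.toNNReal : ℝ≥0) : ℝ)] (⋂ k : ℕ, ⋂ (_ : m ≤ k), (Bad k)ᶜ) ≠ ⊤ := by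
      rw [Real.coe_toNNReal t ht.le, hzero]
      exact ENNReal.zero_ne_top
    have := dimH_le_of_hausdorffMeasure_ne_top hne
    rwa [show ((t.toNNReal : ℝ≥0) : ℝ≥0∞) = ENNReal.ofReal t from rfl] at this

/-- for a compactly supported Borel probability measure `μ` on `ℝ^q` and
`r ∈ (0,∞)`, the Hausdorff dimension of the measure,
`dim_H^* μ = inf { dim_H A : A Borel, μ(A) = 1 }`, is bounded by the lower quantization
dimension of order `r`. -/
theorem hausdorffDim_le_lowerQuantDim (q : ℕ) (r : ℝ) (hr : 0 < r)
    (μ : Measure (EuclideanSpace ℝ (Fin q))) [IsProbabilityMeasure μ]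
    (K : Set (EuclideanSpace ℝ (Fin q))) (hK : IsCompact K) (hμK : μ Kᶜ = 0) :
    sInf {d : ℝ≥0∞ | ∃ A : Set (EuclideanSpace ℝ (Fin q)),
        MeasurableSet A ∧ μ A = 1 ∧ d = dimH A} ≤
      ENNReal.ofReal (lowerQuantDim μ r) := by
  rcases Nat.eq_zero_or_pos q with hq | hq
  · subst hq
    haveI hsub : Subsingleton (EuclideanSpace ℝ (Fin 0)) :=
      ⟨fun a b => by ext i; exact Fin.elim0 i⟩
    refine le_trans (sInf_le ⟨Set.univ, MeasurableSet.univ, measure_univ, rfl⟩) ?_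
    rw [dimH_subsingleton (Set.subsingleton_univ)]
    exact zero_le
  · by_contra hcon
    push_neg at hcon
    obtain ⟨s, _hs0, h1, h2⟩ := ENNReal.lt_iff_exists_real_btwn.1 hcon
    have hDs : lowerQuantDim μ r < s := by
      by_contra hle
      push_neg at hle
      exact absurd h1 (not_lt.2 (ENNReal.ofReal_le_ofReal hle))
    have hspos : 0 < s := ENNReal.ofReal_pos.1 (lt_of_le_of_lt zero_le h1)
    obtain ⟨A, hAm, hA1, hAd⟩ := main_aux q hq r hr μ K hK hμK s hspos hDs
    have hle2 : sInf {d : ℝ≥0∞ | ∃ A : Set (EuclideanSpace ℝ (Fin q)),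
        MeasurableSet A ∧ μ A = 1 ∧ d = dimH A} ≤ ENNReal.ofReal s :=
      le_trans (sInf_le ⟨A, hAm, hA1, rfl⟩) hAd
    exact absurd h2 (not_lt.2 hle2)
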